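/- Let n ∈ ℕ with n ≥ 1 and x, λ ∈ ℝ. The generalized lower triangular Pascal matrix P_{n,λ}[x] is totally positive if and only if x ≥ (n−1)|λ| or x = k|λ| for some k ∈ {0, 1, …, n−1}. -/

import Mathlib

/-- `genPow x lam m` is the generalized power `x^{m|λ} = x(x+λ)⋯(x+(m−1)λ)`,
with `x^{0|λ} = 1`. -/
noncomputable def genPow (x lam : ℝ) (m : ℕ) : ℝ :=
  ∏ t ∈ Finset.range m, (x + t * lam)

/-- The generalized lower triangular Pascal matrix `P_{n,λ}[x]` (0-based
indices: entry `(i,j)` corresponds to math entry `(i+1, j+1)`). -/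
noncomputable def genPascal (n : ℕ) (x lam : ℝ) :
    Matrix (Fin (n + 1)) (Fin (n + 1)) ℝ :=
  fun i j =>
    if (j : ℕ) ≤ (i : ℕ) then
      genPow x lam ((i : ℕ) - (j : ℕ)) * ((i : ℕ).choose (j : ℕ)) else 0

/-- A square real matrix is totally positive if every minor (the determinant
of any square submatrix obtained by selecting rows and columns along strictly
increasing index sequences) is nonnegative. -/
def IsTotallyPositive {m : ℕ} (A : Matrix (Fin m) (Fin m) ℝ) : Prop :=
  ∀ (k : ℕ) (r c : Fin k → Fin m), StrictMono r → StrictMono c →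
    0 ≤ (A.submatrix r c).det

namespace GPTP

lemma le_apply_of_strictMono {k : ℕ} (f : Fin k → Fin k) (h : StrictMono f) :
    ∀ i : Fin k, (i : ℕ) ≤ (f i : ℕ) := by
  intro i
  induction' hi : (i : ℕ) with m ih generalizing i
  · omega
  · have hm : m < k := by omega
    have h1 : (⟨m, hm⟩ : Fin k) < i := by
      rw [Fin.lt_def]; simp [hi]
    have h2 := h h1
    have h3 := ih ⟨m, hm⟩ rfl
    rw [Fin.lt_def] at h2
    omega

lemma perm_eq_one_of_strictMono {k : ℕ} (σ : Equiv.Perm (Fin k))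
    (h : StrictMono (σ : Fin k → Fin k)) : σ = 1 := by
  have hsymm : StrictMono (σ.symm : Fin k → Fin k) := by
    intro i j hij
    have := h.lt_iff_lt (a := σ.symm i) (b := σ.symm j)
    rw [Equiv.apply_symm_apply, Equiv.apply_symm_apply] at this
    exact this.1 hij
  ext i
  have h1 : (i : ℕ) ≤ (σ i : ℕ) := le_apply_of_strictMono _ h i
  have h2 : ((σ i : Fin k) : ℕ) ≤ (i : ℕ) := by
    have := le_apply_of_strictMono _ hsymm (σ i)
    rwa [Equiv.symm_apply_apply] at this
  simp only [Equiv.Perm.coe_one, id_eq]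
  omega

/-- A banded (lower bidiagonal support) matrix with nonnegative entries is totally positive. -/
lemma banded_TP {N : ℕ} (B : Matrix (Fin N) (Fin N) ℝ)
    (h0 : ∀ i j, 0 ≤ B i j)
    (hb : ∀ i j : Fin N, B i j ≠ 0 → (j : ℕ) ≤ (i : ℕ) ∧ (i : ℕ) ≤ (j : ℕ) + 1) :
    IsTotallyPositive B := by
  intro k r c hr hc
  rw [Matrix.det_apply]
  apply Finset.sum_nonneg
  intro σ _
  by_cases hσ : σ = 1
  · subst hσ
    simp only [Equiv.Perm.sign_one, one_smul, Equiv.Perm.coe_one, id_eq]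
    exact Finset.prod_nonneg fun i _ => h0 _ _
  · have hz : ∏ i, (B.submatrix r c) (σ i) i = 0 := by
      by_contra hnz
      have hne : ∀ i, (B.submatrix r c) (σ i) i ≠ 0 := by
        intro i hi
        exact hnz (Finset.prod_eq_zero (Finset.mem_univ i) hi)
      have hband : ∀ i : Fin k, (c i : ℕ) ≤ (r (σ i) : ℕ) ∧ (r (σ i) : ℕ) ≤ (c i : ℕ) + 1 := by
        intro i; exact hb _ _ (hne i)
      have hsm : StrictMono (σ : Fin k → Fin k) := by
        intro i i' hii
        rcases lt_trichotomy (σ i) (σ i') with h' | h' | h'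
        · exact h'
        · exact absurd (σ.injective h') hii.ne
        · exfalso
          have h1 := (hband i).2
          have h2 := (hband i').1
          have h3 : (r (σ i') : ℕ) < (r (σ i) : ℕ) := hr h'
          have h4 : (c i : ℕ) < (c i' : ℕ) := hc hii
          omega
      exact hσ (perm_eq_one_of_strictMono σ hsm)
    rw [hz, smul_zero]

/-- elementary lower matrix: identity plus entry `c` at position `(a, b)` where `a = b+1`. -/
def elem {N : ℕ} (a b : Fin N) (c : ℝ) : Matrix (Fin N) (Fin N) ℝ :=
  Matrix.of fun i j => if i = j then 1 else if i = a ∧ j = b then c else 0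

lemma mul_elem_apply {N : ℕ} (A : Matrix (Fin N) (Fin N) ℝ) (a b : Fin N) (hab : a ≠ b)
    (c : ℝ) (i j : Fin N) :
    (A * elem a b c) i j = A i j + if j = b then c * A i a else 0 := by
  rw [Matrix.mul_apply]
  have : ∀ l : Fin N, A i l * elem a b c l j
      = (if l = j then A i l else 0) + (if j = b ∧ l = a then c * A i l else 0) := by
    intro l
    simp only [elem, Matrix.of_apply]
    by_cases h1 : l = j
    · rw [if_pos h1, if_pos h1, mul_one]
      have hn : ¬ (j = b ∧ l = a) := by
        rintro ⟨hjb, hla⟩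
        apply hab
        rw [← hla, h1, hjb]
      rw [if_neg hn, add_zero]
    · rw [if_neg h1, if_neg h1, zero_add]
      by_cases h2 : l = a ∧ j = b
      · rw [if_pos h2, if_pos ⟨h2.2, h2.1⟩, mul_comm]
      · have hn : ¬ (j = b ∧ l = a) := fun hh => h2 ⟨hh.2, hh.1⟩
        rw [if_neg h2, if_neg hn, mul_zero]
  rw [Finset.sum_congr rfl fun l _ => this l, Finset.sum_add_distrib]
  congr 1
  · simp
  · by_cases hjb : j = b <;> simp [hjb]

lemma TP_mul_elem {N : ℕ} {A : Matrix (Fin N) (Fin N) ℝ} (hA : IsTotallyPositive A)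
    (a b : Fin N) (hab : (a : ℕ) = (b : ℕ) + 1) {c : ℝ} (hc : 0 ≤ c) :
    IsTotallyPositive (A * elem a b c) := by
  have hab' : a ≠ b := by intro h; rw [h] at hab; omega
  intro k r cs hr hcs
  set M : Matrix (Fin k) (Fin k) ℝ := A.submatrix r cs with hM
  by_cases hex : ∃ j0, cs j0 = b
  · obtain ⟨j0, hj0⟩ := hex
    have hS : (A * elem a b c).submatrix r cs
        = M.updateCol j0 (fun i => M i j0 + c * A (r i) a) := by
      ext i j
      rw [Matrix.submatrix_apply, mul_elem_apply A a b hab' c]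
      by_cases hj : j = j0
      · subst hj
        rw [Matrix.updateCol_self, if_pos hj0]
        rfl
      · rw [Matrix.updateCol_ne hj, if_neg, add_zero]
        · rfl
        · intro hcb
          exact hj (hcs.injective (hcb.trans hj0.symm))
    rw [hS]
    have : (fun i => M i j0 + c * A (r i) a)
        = (fun i => M i j0) + c • (fun i' => A (r i') a) := by
      funext i
      simp [smul_eq_mul]
    rw [this, Matrix.det_updateCol_add, Matrix.det_updateCol_smul,
      Matrix.updateCol_eq_self]
    have h2 : 0 ≤ (M.updateCol j0 fun i' => A (r i') a).det := by
      by_cases hea : ∃ j1, cs j1 = a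
      · obtain ⟨j1, hj1⟩ := hea
        have hj01 : j1 ≠ j0 := by
          intro h; rw [h, hj0] at hj1; exact hab' hj1.symm
        have : (M.updateCol j0 fun i' => A (r i') a).det = 0 := by
          apply Matrix.det_zero_of_column_eq hj01.symm
          intro kk
          rw [Matrix.updateCol_self, Matrix.updateCol_ne hj01]
          simp [hM, hj1]
        rw [this]
      · set cs' : Fin k → Fin N := Function.update cs j0 a with hcs'
        have heq : M.updateCol j0 (fun i' => A (r i') a) = A.submatrix r cs' := by
          ext i j
          by_cases hj : j = j0
          · subst hj
            rw [Matrix.updateCol_self]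
            simp [hcs', Function.update_self]
          · rw [Matrix.updateCol_ne hj]
            simp [hM, hcs', Function.update_of_ne hj]
        have hmono : StrictMono cs' := by
          intro u v huv
          rw [Fin.lt_def]
          have hb1 : ∀ w, w ≠ j0 → cs' w = cs w := fun w hw => Function.update_of_ne hw _ _
          have hcsa : ∀ w, w ≠ j0 → (cs w : ℕ) ≠ (a : ℕ) := by
            intro w hw hwa
            exact hea ⟨w, Fin.ext hwa⟩
          by_cases hu : u = j0 <;> by_cases hv : v = j0
          · rw [hu] at huv; rw [hv] at huv; exact absurd huv (lt_irrefl _)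
          · rw [hu]; rw [hb1 v hv]
            simp only [hcs', hu, Function.update_self]
            have : cs j0 < cs v := by rw [← hu]; exact hcs huv
            have h5 := hcsa v hv
            rw [hj0] at this
            have : (b : ℕ) < (cs v : ℕ) := this
            omega
          · rw [hv]; rw [hb1 u hu]
            simp only [hcs', hv, Function.update_self]
            have : cs u < cs j0 := by rw [← hv]; exact hcs huv
            rw [hj0] at this
            have : (cs u : ℕ) < (b : ℕ) := this
            omega
          · rw [hb1 u hu, hb1 v hv]
            exact hcs huv
        rw [heq]
        exact hA k r cs' hr hmono
    have h1 : 0 ≤ M.det := hA k r cs hr hcs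
    nlinarith
  · have hS : (A * elem a b c).submatrix r cs = M := by
      ext i j
      rw [Matrix.submatrix_apply, mul_elem_apply A a b hab' c, if_neg, add_zero]
      · rfl
      · intro hcb; exact hex ⟨j, hcb⟩
    rw [hS]
    exact hA k r cs hr hcs

-- ===== Stage 2 =====

/-- Matrix from an ℕ-indexed entry function. -/
def ofN (N : ℕ) (f : ℕ → ℕ → ℝ) : Matrix (Fin N) (Fin N) ℝ :=
  Matrix.of fun i j => f (i : ℕ) (j : ℕ)

lemma ofN_mul_apply {N : ℕ} (f g : ℕ → ℕ → ℝ) (i j : Fin N) :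
    (ofN N f * ofN N g) i j = ∑ l ∈ Finset.range N, f (i : ℕ) l * g l (j : ℕ) := by
  rw [Matrix.mul_apply]
  exact Fin.sum_univ_eq_sum_range (fun l => f (i : ℕ) l * g l (j : ℕ)) N

lemma sum_range_support_single {h : ℕ → ℝ} {N a : ℕ} (haN : a < N)
    (hs : ∀ l, l < N → l ≠ a → h l = 0) :
    ∑ l ∈ Finset.range N, h l = h a := by
  have hsub : ({a} : Finset ℕ) ⊆ Finset.range N := by
    simp [Finset.singleton_subset_iff, haN]
  have hz : ∀ l ∈ Finset.range N, l ∉ ({a} : Finset ℕ) → h l = 0 := by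
    intro l hl hla
    exact hs l (Finset.mem_range.1 hl) (by simpa using hla)
  rw [← Finset.sum_subset hsub hz]
  exact Finset.sum_singleton h a

lemma sum_range_support_pair {h : ℕ → ℝ} {N a b : ℕ} (hab : a ≠ b) (haN : a < N) (hbN : b < N)
    (hs : ∀ l, l < N → l ≠ a → l ≠ b → h l = 0) :
    ∑ l ∈ Finset.range N, h l = h a + h b := by
  have hsub : ({a, b} : Finset ℕ) ⊆ Finset.range N := by
    intro l hl
    simp only [Finset.mem_insert, Finset.mem_singleton] at hl
    rcases hl with rfl | rfl <;> simp [haN, hbN]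
  have hz : ∀ l ∈ Finset.range N, l ∉ ({a, b} : Finset ℕ) → h l = 0 := by
    intro l hl hla
    simp only [Finset.mem_insert, Finset.mem_singleton, not_or] at hla
    exact hs l (Finset.mem_range.1 hl) hla.1 hla.2
  rw [← Finset.sum_subset hsub hz]
  exact Finset.sum_pair hab

@[simp] lemma genPow_zero (x lam : ℝ) : genPow x lam 0 = 1 := by simp [genPow]

lemma genPow_succ (x lam : ℝ) (m : ℕ) :
    genPow x lam (m + 1) = genPow x lam m * (x + m * lam) :=
  Finset.prod_range_succ _ m

lemma genPow_succ' (x lam : ℝ) (m : ℕ) :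
    genPow x lam (m + 1) = x * genPow (x + lam) lam m := by
  rw [genPow, Finset.prod_range_succ']
  simp only [Nat.cast_zero, zero_mul, add_zero]
  rw [mul_comm, genPow]
  congr 1
  apply Finset.prod_congr rfl
  intro t _
  push_cast
  ring

lemma genPow_one (x lam : ℝ) : genPow x lam 1 = x := by
  rw [genPow, Finset.prod_range_one]
  norm_num

/-- The core three-term identity behind all factorizations. -/
lemma core_id (a lam : ℝ) (q' d : ℕ) :
    ((q' + d + 2).choose (q' + 1) : ℝ) * genPow a lam (d + 1)
      = ((q' + d + 1).choose q' : ℝ) * genPow (a + lam) lam (d + 1)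
        + (a - ((q' : ℝ) + 1) * lam) * ((q' + d + 1).choose (q' + 1) : ℝ)
            * genPow (a + lam) lam d := by
  have hp : (q' + d + 2).choose (q' + 1)
      = (q' + d + 1).choose q' + (q' + d + 1).choose (q' + 1) := by
    exact Nat.choose_succ_succ (q' + d + 1) q' 
  have hr : (q' + d + 1).choose (q' + 1) * (q' + 1) = (q' + d + 1).choose q' * (d + 1) := by
    have h1 := Nat.choose_succ_right_eq (q' + d + 1) q'
    have h2 : q' + d + 1 - q' = d + 1 := by omega
    rw [h2] at h1
    exact h1
  have hp' : ((q' + d + 2).choose (q' + 1) : ℝ)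
      = ((q' + d + 1).choose q' : ℝ) + ((q' + d + 1).choose (q' + 1) : ℝ) := by
    exact_mod_cast congrArg (Nat.cast : ℕ → ℝ) hp
  have hr' : ((q' + d + 1).choose (q' + 1) : ℝ) * ((q' : ℝ) + 1)
      = ((q' + d + 1).choose q' : ℝ) * ((d : ℝ) + 1) := by
    exact_mod_cast congrArg (Nat.cast : ℕ → ℝ) hr
  rw [genPow_succ' a lam d, genPow_succ (a + lam) lam d]
  linear_combination (a * genPow (a + lam) lam d) * hp'
    + (lam * genPow (a + lam) lam d) * hr'

/-- bidiagonal entry function -/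
def bdF (s : ℕ → ℝ) (m : ℕ) (i j : ℕ) : ℝ :=
  if i = j then 1 else if i = j + 1 ∧ i ≤ m then s i else 0

lemma bdm_zero (N : ℕ) (s : ℕ → ℝ) : ofN N (bdF s 0) = 1 := by
  ext i j
  simp only [ofN, Matrix.of_apply, bdF, Matrix.one_apply]
  by_cases h : (i : ℕ) = (j : ℕ)
  · rw [if_pos h, if_pos (Fin.ext h)]
  · rw [if_neg h, if_neg (fun hh => h (congrArg Fin.val hh)), if_neg (by omega)]

lemma bdm_succ {N : ℕ} (s : ℕ → ℝ) (m : ℕ) (h : m + 1 < N) :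
    ofN N (bdF s (m + 1))
      = ofN N (bdF s m) * elem ⟨m + 1, h⟩ ⟨m, by omega⟩ (s (m + 1)) := by
  ext i j
  rw [mul_elem_apply _ _ _ (by intro hh; rw [Fin.mk.injEq] at hh; omega) (s (m + 1))]
  by_cases hjv : (j : ℕ) = m
  · rw [if_pos (Fin.ext hjv : j = ⟨m, by omega⟩)]
    show bdF s (m + 1) (i : ℕ) (j : ℕ)
      = bdF s m (i : ℕ) (j : ℕ) + s (m + 1) * bdF s m (i : ℕ) ((⟨m + 1, h⟩ : Fin N) : ℕ)
    have hv : ((⟨m + 1, h⟩ : Fin N) : ℕ) = m + 1 := rfl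
    rw [hv, hjv]
    unfold bdF
    by_cases him : (i : ℕ) = m + 1
    · rw [if_neg (by omega), if_pos ⟨him, by omega⟩, if_neg (by omega),
        if_neg (by omega : ¬((i : ℕ) = m + 1 ∧ (i : ℕ) ≤ m)), if_pos him, him]
      ring
    · split_ifs <;> first | (exfalso; omega) | ring1
  · rw [if_neg (fun hh => hjv (congrArg Fin.val hh)), add_zero]
    show bdF s (m + 1) (i : ℕ) (j : ℕ) = bdF s m (i : ℕ) (j : ℕ)
    unfold bdF
    split_ifs <;> first | rfl | (exfalso; omega)

lemma bdm_stall {N : ℕ} (s : ℕ → ℝ) (m : ℕ) (h : N ≤ m + 1) :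
    ofN N (bdF s (m + 1)) = ofN N (bdF s m) := by
  ext i j
  simp only [ofN, Matrix.of_apply, bdF]
  have : (i : ℕ) < N := i.isLt
  split_ifs <;> first | rfl | omega

lemma TP_mul_bdm {N : ℕ} {A : Matrix (Fin N) (Fin N) ℝ} (hA : IsTotallyPositive A)
    {s : ℕ → ℝ} (hs : ∀ i, 0 ≤ s i) (m : ℕ) :
    IsTotallyPositive (A * ofN N (bdF s m)) := by
  induction m with
  | zero => rw [bdm_zero, mul_one]; exact hA
  | succ m ih =>
    by_cases h : m + 1 < N
    · rw [bdm_succ s m h, ← Matrix.mul_assoc]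
      exact TP_mul_elem ih _ _ rfl (hs (m + 1))
    · rw [bdm_stall s m (by omega)]
      exact ih

/-- dense factorial matrix entry function -/
noncomputable def qF (lam : ℝ) (t : ℕ) (i j : ℕ) : ℝ :=
  if t ≤ j ∧ j ≤ i then (i.factorial : ℝ) / (j.factorial : ℝ) * lam ^ (i - j)
  else if i = j then 1 else 0

lemma Qm_top {N : ℕ} (lam : ℝ) (t : ℕ) (h : N ≤ t + 1) : ofN N (qF lam t) = 1 := by
  ext i j
  have hiN : (i : ℕ) < N := i.isLt
  have hjN : (j : ℕ) < N := j.isLt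
  simp only [ofN, Matrix.of_apply, qF, Matrix.one_apply]
  by_cases hij : (i : ℕ) = (j : ℕ)
  · rw [if_pos (Fin.ext hij : i = j)]
    by_cases h1 : t ≤ (j : ℕ) ∧ (j : ℕ) ≤ (i : ℕ)
    · rw [if_pos h1, hij, Nat.sub_self, pow_zero, mul_one,
        div_self (by exact_mod_cast (Nat.factorial_pos _).ne')]
    · rw [if_neg h1, if_pos hij]
  · rw [if_neg (fun hh => hij (congrArg Fin.val hh)), if_neg (by omega), if_neg hij]

lemma Qm_step {N : ℕ} (lam : ℝ) (t : ℕ) (h : t + 1 < N) :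
    ofN N (qF lam t)
      = ofN N (qF lam (t + 1)) * elem ⟨t + 1, h⟩ ⟨t, by omega⟩ (((t : ℝ) + 1) * lam) := by
  ext i j
  rw [mul_elem_apply _ _ _ (by intro hh; rw [Fin.mk.injEq] at hh; omega)]
  by_cases hjv : (j : ℕ) = t
  · rw [if_pos (Fin.ext hjv : j = ⟨t, by omega⟩)]
    show qF lam t (i : ℕ) (j : ℕ)
      = qF lam (t + 1) (i : ℕ) (j : ℕ)
        + ((t : ℝ) + 1) * lam * qF lam (t + 1) (i : ℕ) ((⟨t + 1, h⟩ : Fin N) : ℕ)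
    have hv : ((⟨t + 1, h⟩ : Fin N) : ℕ) = t + 1 := rfl
    rw [hv, hjv]
    have e1 : qF lam (t + 1) (i : ℕ) t = if (i : ℕ) = t then 1 else 0 := by
      unfold qF
      rw [if_neg (by omega)]
    rcases Nat.lt_trichotomy t (i : ℕ) with hi | hi | hi
    · have e2 : qF lam (t + 1) (i : ℕ) (t + 1)
          = ((i : ℕ).factorial : ℝ) / ((t + 1).factorial : ℝ) * lam ^ ((i : ℕ) - (t + 1)) := by
        unfold qF
        rw [if_pos ⟨le_refl _, by omega⟩]
      have e3 : qF lam t (i : ℕ) t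
          = ((i : ℕ).factorial : ℝ) / (t.factorial : ℝ) * lam ^ ((i : ℕ) - t) := by
        unfold qF
        rw [if_pos ⟨le_refl _, by omega⟩]
      rw [e1, e2, e3, if_neg (by omega)]
      rw [show (i : ℕ) - t = ((i : ℕ) - (t + 1)) + 1 by omega, pow_succ, Nat.factorial_succ]
      have h1 : (t.factorial : ℝ) ≠ 0 := by exact_mod_cast t.factorial_ne_zero
      have h2 : ((t : ℝ) + 1) ≠ 0 := by positivity
      push_cast
      field_simp
      ring
    · have e3 : qF lam t (i : ℕ) t = 1 := by
        unfold qF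
        rw [if_pos ⟨le_refl _, by omega⟩, show (i : ℕ) - t = 0 by omega, pow_zero, mul_one,
          show (i : ℕ) = t from hi.symm,
          div_self (by exact_mod_cast (Nat.factorial_pos _).ne')]
      have e4 : qF lam (t + 1) (i : ℕ) (t + 1) = 0 := by
        unfold qF
        rw [if_neg (by omega), if_neg (by omega)]
      rw [e1, e3, e4, if_pos hi.symm]
      ring
    · have e5 : qF lam t (i : ℕ) t = 0 := by
        unfold qF
        rw [if_neg (by omega), if_neg (by omega)]
      have e6 : qF lam (t + 1) (i : ℕ) (t + 1) = 0 := by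
        unfold qF
        rw [if_neg (by omega), if_neg (by omega)]
      rw [e1, e5, e6, if_neg (by omega)]
      ring
  · rw [if_neg (fun hh => hjv (congrArg Fin.val hh)), add_zero]
    show qF lam t (i : ℕ) (j : ℕ) = qF lam (t + 1) (i : ℕ) (j : ℕ)
    unfold qF
    split_ifs <;> first | rfl | (exfalso; omega)

lemma TP_mul_Qm {N : ℕ} {A : Matrix (Fin N) (Fin N) ℝ} (hA : IsTotallyPositive A)
    {lam : ℝ} (hlam : 0 ≤ lam) :
    IsTotallyPositive (A * ofN N (qF lam 0)) := by
  suffices haux : ∀ d t, N ≤ t + d + 1 → IsTotallyPositive (A * ofN N (qF lam t)) by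
    exact haux N 0 (by omega)
  intro d
  induction d with
  | zero =>
    intro t ht
    rw [Qm_top lam t (by omega), mul_one]
    exact hA
  | succ d ih =>
    intro t ht
    by_cases h1 : N ≤ t + 1
    · rw [Qm_top lam t h1, mul_one]
      exact hA
    · rw [Qm_step lam t (by omega), ← Matrix.mul_assoc]
      exact TP_mul_elem (ih (t + 1) (by omega)) _ _ rfl
        (mul_nonneg (by positivity) hlam)
-- ===== Stage 3: the case x ≥ (n-1)|lam| =====

/-- entries of the partial products in the bidiagonal factorization -/
noncomputable def fF (x lam : ℝ) (t : ℕ) (i j : ℕ) : ℝ :=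
  if t ≤ j ∧ j ≤ i then genPow (x + (t : ℝ) * lam) lam (i - j) * ((i - t).choose (j - t) : ℝ)
  else if i = j then 1 else 0

/-- subdiagonal weights -/
noncomputable def sF (x lam : ℝ) (t n : ℕ) (l : ℕ) : ℝ :=
  if t + 1 ≤ l ∧ l ≤ n then x + (2 * (t : ℝ) + 1 - (l : ℝ)) * lam else 0

lemma Fm_top {N : ℕ} (x lam : ℝ) (t : ℕ) (h : N ≤ t + 1) : ofN N (fF x lam t) = 1 := by
  ext i j
  have hiN : (i : ℕ) < N := i.isLt
  have hjN : (j : ℕ) < N := j.isLt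
  simp only [ofN, Matrix.of_apply, fF, Matrix.one_apply]
  by_cases h1 : t ≤ (j : ℕ) ∧ (j : ℕ) ≤ (i : ℕ)
  · have hi : (i : ℕ) = t := by omega
    have hj : (j : ℕ) = t := by omega
    rw [if_pos h1, if_pos (Fin.ext (hi.trans hj.symm) : i = j), hi, hj]
    simp
  · rw [if_neg h1]
    by_cases h2 : (i : ℕ) = (j : ℕ)
    · rw [if_pos h2, if_pos (Fin.ext h2)]
    · rw [if_neg h2, if_neg (fun hh => h2 (congrArg Fin.val hh))]

lemma Fm_step {N : ℕ} (x lam : ℝ) (t : ℕ) (hN : 1 ≤ N) :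
    ofN N (fF x lam t)
      = ofN N (fF x lam (t + 1)) * ofN N (bdF (sF x lam t (N - 1)) (N - 1)) := by
  ext i j
  rw [ofN_mul_apply]
  have hiN : (i : ℕ) < N := i.isLt
  have hjN : (j : ℕ) < N := j.isLt
  show fF x lam t (i : ℕ) (j : ℕ) = _
  have harg : x + ((t + 1 : ℕ) : ℝ) * lam = (x + (t : ℝ) * lam) + lam := by
    push_cast; ring
  by_cases hj1 : (j : ℕ) + 1 < N
  · rw [sum_range_support_pair (a := (j : ℕ)) (b := (j : ℕ) + 1) (by omega) hjN hj1
      (fun l hl hla hlb => by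
        have hz : bdF (sF x lam t (N - 1)) (N - 1) l (j : ℕ) = 0 := by
          unfold bdF
          rw [if_neg (by omega), if_neg (by omega)]
        rw [hz, mul_zero])]
    have hb1 : bdF (sF x lam t (N - 1)) (N - 1) (j : ℕ) (j : ℕ) = 1 := by
      unfold bdF
      rw [if_pos rfl]
    have hb2 : bdF (sF x lam t (N - 1)) (N - 1) ((j : ℕ) + 1) (j : ℕ)
        = sF x lam t (N - 1) ((j : ℕ) + 1) := by
      unfold bdF
      rw [if_neg (by omega), if_pos ⟨rfl, by omega⟩]
    rw [hb1, hb2, mul_one]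
    by_cases hjt : t ≤ (j : ℕ)
    · have hsv : sF x lam t (N - 1) ((j : ℕ) + 1)
          = x + (2 * (t : ℝ) + 1 - ((j : ℕ) + 1 : ℝ)) * lam := by
        unfold sF
        rw [if_pos ⟨by omega, by omega⟩]
        norm_num
      rw [hsv]
      rcases Nat.lt_trichotomy (i : ℕ) (j : ℕ) with hij | hij | hij
      · have eL : fF x lam t (i : ℕ) (j : ℕ) = 0 := by
          unfold fF; rw [if_neg (by omega), if_neg (by omega)]
        have e1 : fF x lam (t + 1) (i : ℕ) (j : ℕ) = 0 := by
          unfold fF; rw [if_neg (by omega), if_neg (by omega)]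
        have e2 : fF x lam (t + 1) (i : ℕ) ((j : ℕ) + 1) = 0 := by
          unfold fF; rw [if_neg (by omega), if_neg (by omega)]
        rw [eL, e1, e2]; ring
      · have eL : fF x lam t (i : ℕ) (j : ℕ) = 1 := by
          unfold fF
          rw [if_pos ⟨hjt, by omega⟩, show (i : ℕ) - (j : ℕ) = 0 by omega,
            show ((j : ℕ) - t) = ((i : ℕ) - t) by omega, genPow_zero, Nat.choose_self,
            Nat.cast_one, one_mul]
        have e1 : fF x lam (t + 1) (i : ℕ) (j : ℕ) = 1 := by
          unfold fF
          by_cases hc : t + 1 ≤ (j : ℕ)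
          · rw [if_pos ⟨hc, by omega⟩, show (i : ℕ) - (j : ℕ) = 0 by omega,
              show ((j : ℕ) - (t + 1)) = ((i : ℕ) - (t + 1)) by omega, genPow_zero,
              Nat.choose_self, Nat.cast_one, one_mul]
          · rw [if_neg (by omega), if_pos (by omega)]
        have e2 : fF x lam (t + 1) (i : ℕ) ((j : ℕ) + 1) = 0 := by
          unfold fF; rw [if_neg (by omega), if_neg (by omega)]
        rw [eL, e1, e2]; ring
      · by_cases hjt' : t + 1 ≤ (j : ℕ)
        · set q' : ℕ := (j : ℕ) - t - 1 with hq'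
          set d : ℕ := (i : ℕ) - (j : ℕ) - 1 with hd
          have eL : fF x lam t (i : ℕ) (j : ℕ)
              = genPow (x + (t : ℝ) * lam) lam (d + 1) * (((q' + d + 2).choose (q' + 1) : ℕ) : ℝ) := by
            unfold fF
            rw [if_pos ⟨hjt, by omega⟩, show (i : ℕ) - (j : ℕ) = d + 1 by omega,
              show ((i : ℕ) - t) = q' + d + 2 by omega, show ((j : ℕ) - t) = q' + 1 by omega]
          have e1 : fF x lam (t + 1) (i : ℕ) (j : ℕ)
              = genPow ((x + (t : ℝ) * lam) + lam) lam (d + 1)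
                  * (((q' + d + 1).choose q' : ℕ) : ℝ) := by
            unfold fF
            rw [if_pos ⟨hjt', by omega⟩, show (i : ℕ) - (j : ℕ) = d + 1 by omega,
              show ((i : ℕ) - (t + 1)) = q' + d + 1 by omega,
              show ((j : ℕ) - (t + 1)) = q' by omega, harg]
          have e2 : fF x lam (t + 1) (i : ℕ) ((j : ℕ) + 1)
              = genPow ((x + (t : ℝ) * lam) + lam) lam d
                  * (((q' + d + 1).choose (q' + 1) : ℕ) : ℝ) := by
            unfold fF
            rw [if_pos ⟨by omega, by omega⟩, show (i : ℕ) - ((j : ℕ) + 1) = d by omega,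
              show ((i : ℕ) - (t + 1)) = q' + d + 1 by omega,
              show (((j : ℕ) + 1) - (t + 1)) = q' + 1 by omega, harg]
          have hcoef : x + (2 * (t : ℝ) + 1 - ((j : ℕ) + 1 : ℝ)) * lam
              = (x + (t : ℝ) * lam) - ((q' : ℝ) + 1) * lam := by
            have hjq : ((j : ℕ) : ℝ) = (q' : ℝ) + 1 + (t : ℝ) := by
              have hn : (j : ℕ) = q' + 1 + t := by omega
              exact_mod_cast congrArg (Nat.cast : ℕ → ℝ) hn
            rw [hjq]; ring
          rw [eL, e1, e2, hcoef]
          have hcore := core_id (x + (t : ℝ) * lam) lam q' d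
          linarith [hcore]
        · have hjt2 : (j : ℕ) = t := by omega
          set d : ℕ := (i : ℕ) - t - 1 with hd
          have eL : fF x lam t (i : ℕ) (j : ℕ) = genPow (x + (t : ℝ) * lam) lam (d + 1) := by
            unfold fF
            rw [if_pos ⟨hjt, by omega⟩, show (i : ℕ) - (j : ℕ) = d + 1 by omega,
              show ((j : ℕ) - t) = 0 by omega, Nat.choose_zero_right, Nat.cast_one, mul_one]
          have e1 : fF x lam (t + 1) (i : ℕ) (j : ℕ) = 0 := by
            unfold fF; rw [if_neg (by omega), if_neg (by omega)]
          have e2 : fF x lam (t + 1) (i : ℕ) ((j : ℕ) + 1)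
              = genPow ((x + (t : ℝ) * lam) + lam) lam d := by
            unfold fF
            rw [if_pos ⟨by omega, by omega⟩, show (i : ℕ) - ((j : ℕ) + 1) = d by omega,
              show (((j : ℕ) + 1) - (t + 1)) = 0 by omega, Nat.choose_zero_right,
              Nat.cast_one, mul_one, harg]
          have hcoef : x + (2 * (t : ℝ) + 1 - ((j : ℕ) + 1 : ℝ)) * lam = x + (t : ℝ) * lam := by
            have hjq : ((j : ℕ) : ℝ) = (t : ℝ) := by
              exact_mod_cast congrArg (Nat.cast : ℕ → ℝ) hjt2
            rw [hjq]; ring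
          rw [eL, e1, e2, hcoef, genPow_succ']
          ring
    · have hsv : sF x lam t (N - 1) ((j : ℕ) + 1) = 0 := by
        unfold sF
        rw [if_neg (by omega)]
      rw [hsv, mul_zero, add_zero]
      have eL : fF x lam t (i : ℕ) (j : ℕ) = if (i : ℕ) = (j : ℕ) then 1 else 0 := by
        unfold fF; rw [if_neg (by omega)]
      have e1 : fF x lam (t + 1) (i : ℕ) (j : ℕ) = if (i : ℕ) = (j : ℕ) then 1 else 0 := by
        unfold fF; rw [if_neg (by omega)]
      rw [eL, e1]
  · rw [sum_range_support_single (a := (j : ℕ)) hjN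
      (fun l hl hla => by
        have hz : bdF (sF x lam t (N - 1)) (N - 1) l (j : ℕ) = 0 := by
          unfold bdF
          rw [if_neg (by omega), if_neg (by omega)]
        rw [hz, mul_zero])]
    have hb1 : bdF (sF x lam t (N - 1)) (N - 1) (j : ℕ) (j : ℕ) = 1 := by
      unfold bdF
      rw [if_pos rfl]
    rw [hb1, mul_one]
    have hij : (i : ℕ) ≤ (j : ℕ) := by omega
    by_cases h2 : (i : ℕ) = (j : ℕ)
    · have eL : fF x lam t (i : ℕ) (j : ℕ) = 1 := by
        unfold fF
        by_cases h3 : t ≤ (j : ℕ)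
        · rw [if_pos ⟨h3, by omega⟩, show (i : ℕ) - (j : ℕ) = 0 by omega,
            show ((j : ℕ) - t) = ((i : ℕ) - t) by omega, genPow_zero, Nat.choose_self,
            Nat.cast_one, one_mul]
        · rw [if_neg (by omega), if_pos h2]
      have e1 : fF x lam (t + 1) (i : ℕ) (j : ℕ) = 1 := by
        unfold fF
        by_cases h4 : t + 1 ≤ (j : ℕ)
        · rw [if_pos ⟨h4, by omega⟩, show (i : ℕ) - (j : ℕ) = 0 by omega,
            show ((j : ℕ) - (t + 1)) = ((i : ℕ) - (t + 1)) by omega, genPow_zero,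
            Nat.choose_self, Nat.cast_one, one_mul]
        · rw [if_neg (by omega), if_pos h2]
      rw [eL, e1]
    · have eL : fF x lam t (i : ℕ) (j : ℕ) = 0 := by
        unfold fF; rw [if_neg (by omega), if_neg h2]
      have e1 : fF x lam (t + 1) (i : ℕ) (j : ℕ) = 0 := by
        unfold fF; rw [if_neg (by omega), if_neg h2]
      rw [eL, e1]

lemma Fm_zero {n : ℕ} (x lam : ℝ) : ofN (n + 1) (fF x lam 0) = genPascal n x lam := by
  ext i j
  simp only [ofN, Matrix.of_apply, fF, genPascal]
  by_cases h : (j : ℕ) ≤ (i : ℕ)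
  · rw [if_pos ⟨Nat.zero_le _, h⟩, if_pos h]
    norm_num
  · rw [if_neg (by omega), if_neg (by omega), if_neg h]

lemma TP_genPascal_of_big (n : ℕ) (x lam : ℝ) (hx : ((n : ℝ) - 1) * |lam| ≤ x) :
    IsTotallyPositive (genPascal n x lam) := by
  have hone : IsTotallyPositive (1 : Matrix (Fin (n + 1)) (Fin (n + 1)) ℝ) := by
    apply banded_TP
    · intro i j
      rw [Matrix.one_apply]
      split_ifs <;> norm_num
    · intro i j hne
      rw [Matrix.one_apply] at hne
      by_cases hij : i = j
      · rw [hij]; omega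
      · rw [if_neg hij] at hne; exact absurd rfl hne
  have haux : ∀ d t, n ≤ t + d → IsTotallyPositive (ofN (n + 1) (fF x lam t)) := by
    intro d
    induction d with
    | zero =>
      intro t ht
      rw [Fm_top x lam t (by omega)]
      exact hone
    | succ d ih =>
      intro t ht
      by_cases h1 : n ≤ t
      · rw [Fm_top x lam t (by omega)]
        exact hone
      · rw [Fm_step x lam t (by omega)]
        apply TP_mul_bdm (ih (t + 1) (by omega))
        intro l
        unfold sF
        split_ifs with hcond
        · obtain ⟨hl1, hl2⟩ := hcond
          have hb1 : (2 * (t : ℝ) + 1 - (l : ℝ)) ≤ (n : ℝ) - 1 := by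
            have h2 : (t : ℝ) ≤ (n : ℝ) - 1 := by
              have : (t : ℕ) + 1 ≤ n := by omega
              have := (Nat.cast_le (α := ℝ)).2 this
              push_cast at this
              linarith
            have h3 : ((t : ℕ) : ℝ) + 1 ≤ (l : ℝ) := by
              have := (Nat.cast_le (α := ℝ)).2 hl1
              push_cast at this
              linarith
            linarith
          have hb2 : -((n : ℝ) - 1) ≤ (2 * (t : ℝ) + 1 - (l : ℝ)) := by
            have h4 : (l : ℝ) ≤ (n : ℝ) - 1 + 1 := by
              have hl2' : l ≤ n := by omega
              have := (Nat.cast_le (α := ℝ)).2 hl2'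
              push_cast at this
              linarith
            have h5 : (0 : ℝ) ≤ (t : ℝ) := Nat.cast_nonneg t
            linarith
          have habs : |(2 * (t : ℝ) + 1 - (l : ℝ)) * lam| ≤ ((n : ℝ) - 1) * |lam| := by
            rw [abs_mul]
            apply mul_le_mul_of_nonneg_right _ (abs_nonneg lam)
            rw [abs_le]
            exact ⟨hb2, hb1⟩
          have := neg_abs_le ((2 * (t : ℝ) + 1 - (l : ℝ)) * lam)
          linarith
        · exact le_refl _
  rw [← Fm_zero x lam]
  exact haux n 0 (by omega)
-- ===== Stage 4: lattice cases =====

lemma TP_one {N : ℕ} : IsTotallyPositive (1 : Matrix (Fin N) (Fin N) ℝ) := by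
  apply banded_TP
  · intro i j
    rw [Matrix.one_apply]
    split_ifs <;> norm_num
  · intro i j hne
    rw [Matrix.one_apply] at hne
    by_cases hij : i = j
    · rw [hij]; omega
    · rw [if_neg hij] at hne; exact absurd rfl hne

lemma genPow_x_zero (lam : ℝ) (m : ℕ) (hm : 1 ≤ m) : genPow 0 lam m = 0 := by
  rw [genPow]
  apply Finset.prod_eq_zero (Finset.mem_range.2 (by omega : 0 < m))
  norm_num

lemma genPascal_x_zero (n : ℕ) (lam : ℝ) : genPascal n 0 lam = 1 := by
  ext i j
  simp only [genPascal, Matrix.one_apply]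
  by_cases h : (j : ℕ) ≤ (i : ℕ)
  · by_cases h2 : (i : ℕ) = (j : ℕ)
    · rw [if_pos h, if_pos (Fin.ext h2), show (i : ℕ) - (j : ℕ) = 0 by omega, genPow_zero, h2,
        Nat.choose_self]
      norm_num
    · rw [if_pos h, if_neg (fun hh => h2 (congrArg Fin.val hh)),
        genPow_x_zero lam _ (by omega), zero_mul]
  · rw [if_neg h, if_neg (fun hh => h (le_of_eq (congrArg Fin.val hh).symm))]

-- ---- negative lam lattice ----

lemma genPow_lattice_neg (mu : ℝ) (k m : ℕ) :
    genPow ((k : ℝ) * mu) (-mu) m = mu ^ m * ((k.descFactorial m : ℕ) : ℝ) := by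
  induction m with
  | zero => simp
  | succ m ih =>
    rw [genPow_succ, ih]
    rcases le_or_gt (m + 1) k with h | h
    · have hc : ((k : ℝ) * mu + (m : ℝ) * (-mu)) = ((k - m : ℕ) : ℝ) * mu := by
        rw [Nat.cast_sub (show m ≤ k by omega)]
        ring
      have hds : (k.descFactorial (m + 1) : ℕ) = (k - m) * k.descFactorial m :=
        Nat.descFactorial_succ k m
      rw [hc, hds]
      push_cast
      ring
    · have hz1 : k.descFactorial (m + 1) = 0 := Nat.descFactorial_eq_zero_iff_lt.2 (by omega)
      rw [hz1]
      rcases Nat.lt_or_ge k m with h2 | h2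
      · have hz2 : k.descFactorial m = 0 := Nat.descFactorial_eq_zero_iff_lt.2 h2
        rw [hz2]
        push_cast
        ring
      · have hkm : k = m := by omega
        subst hkm
        push_cast
        ring

/-- entries for the negative-lambda lattice points -/
noncomputable def dFe (mu : ℝ) (k : ℕ) (i j : ℕ) : ℝ :=
  if j ≤ i then ((i.choose j : ℕ) : ℝ) * mu ^ (i - j) * ((k.descFactorial (i - j) : ℕ) : ℝ)
  else 0

lemma dF_zero (N : ℕ) (mu : ℝ) : ofN N (dFe mu 0) = 1 := by
  ext i j
  simp only [ofN, Matrix.of_apply, dFe, Matrix.one_apply]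
  by_cases h : (j : ℕ) ≤ (i : ℕ)
  · by_cases h2 : (i : ℕ) = (j : ℕ)
    · rw [if_pos h, if_pos (Fin.ext h2), show (i : ℕ) - (j : ℕ) = 0 by omega, h2,
        Nat.choose_self]
      norm_num
    · rw [if_pos h, if_neg (fun hh => h2 (congrArg Fin.val hh)),
        Nat.descFactorial_eq_zero_iff_lt.2 (by omega)]
      norm_num
  · rw [if_neg h, if_neg (fun hh => h (le_of_eq (congrArg Fin.val hh).symm))]

lemma ndf (k d : ℕ) :
    (k + 1).descFactorial (d + 1) = k.descFactorial (d + 1) + (d + 1) * k.descFactorial d := by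
  rw [Nat.succ_descFactorial_succ, Nat.descFactorial_succ]
  rcases le_or_gt d k with h | h
  · have hh : k - d + (d + 1) = k + 1 := by omega
    rw [← Nat.add_mul, hh]
  · rw [Nat.descFactorial_eq_zero_iff_lt.2 h]
    simp

lemma dF_succ (N : ℕ) (mu : ℝ) (k : ℕ) :
    ofN N (dFe mu (k + 1)) = ofN N (dFe mu k) * ofN N (bdF (fun l => (l : ℝ) * mu) N) := by
  ext i j
  rw [ofN_mul_apply]
  have hiN : (i : ℕ) < N := i.isLt
  have hjN : (j : ℕ) < N := j.isLt
  show dFe mu (k + 1) (i : ℕ) (j : ℕ) = _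
  by_cases hj1 : (j : ℕ) + 1 < N
  · rw [sum_range_support_pair (a := (j : ℕ)) (b := (j : ℕ) + 1) (by omega) hjN hj1
      (fun l hl hla hlb => by
        have hz : bdF (fun l => (l : ℝ) * mu) N l (j : ℕ) = 0 := by
          unfold bdF
          rw [if_neg (by omega), if_neg (by omega)]
        rw [hz, mul_zero])]
    have hb1 : bdF (fun l => (l : ℝ) * mu) N (j : ℕ) (j : ℕ) = 1 := by
      unfold bdF; rw [if_pos rfl]
    have hb2 : bdF (fun l => (l : ℝ) * mu) N ((j : ℕ) + 1) (j : ℕ)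
        = (((j : ℕ) : ℝ) + 1) * mu := by
      unfold bdF
      rw [if_neg (by omega), if_pos ⟨rfl, by omega⟩]
      push_cast
      ring
    rw [hb1, hb2, mul_one]
    rcases Nat.lt_trichotomy (i : ℕ) (j : ℕ) with hij | hij | hij
    · have eL : dFe mu (k + 1) (i : ℕ) (j : ℕ) = 0 := by
        unfold dFe; rw [if_neg (by omega)]
      have e1 : dFe mu k (i : ℕ) (j : ℕ) = 0 := by
        unfold dFe; rw [if_neg (by omega)]
      have e2 : dFe mu k (i : ℕ) ((j : ℕ) + 1) = 0 := by
        unfold dFe; rw [if_neg (by omega)]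
      rw [eL, e1, e2]; ring
    · have eL : dFe mu (k + 1) (i : ℕ) (j : ℕ) = 1 := by
        unfold dFe
        rw [if_pos (by omega), show (i : ℕ) - (j : ℕ) = 0 by omega,
          show (i : ℕ) = (j : ℕ) from hij, Nat.choose_self]
        norm_num
      have e1 : dFe mu k (i : ℕ) (j : ℕ) = 1 := by
        unfold dFe
        rw [if_pos (by omega), show (i : ℕ) - (j : ℕ) = 0 by omega,
          show (i : ℕ) = (j : ℕ) from hij, Nat.choose_self]
        norm_num
      have e2 : dFe mu k (i : ℕ) ((j : ℕ) + 1) = 0 := by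
        unfold dFe; rw [if_neg (by omega)]
      rw [eL, e1, e2]; ring
    · set d : ℕ := (i : ℕ) - (j : ℕ) - 1 with hd
      have eL : dFe mu (k + 1) (i : ℕ) (j : ℕ)
          = (((i : ℕ).choose (j : ℕ) : ℕ) : ℝ) * mu ^ (d + 1)
              * (((k + 1).descFactorial (d + 1) : ℕ) : ℝ) := by
        unfold dFe
        rw [if_pos (by omega), show (i : ℕ) - (j : ℕ) = d + 1 by omega]
      have e1 : dFe mu k (i : ℕ) (j : ℕ)
          = (((i : ℕ).choose (j : ℕ) : ℕ) : ℝ) * mu ^ (d + 1)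
              * ((k.descFactorial (d + 1) : ℕ) : ℝ) := by
        unfold dFe
        rw [if_pos (by omega), show (i : ℕ) - (j : ℕ) = d + 1 by omega]
      have e2 : dFe mu k (i : ℕ) ((j : ℕ) + 1)
          = (((i : ℕ).choose ((j : ℕ) + 1) : ℕ) : ℝ) * mu ^ d
              * ((k.descFactorial d : ℕ) : ℝ) := by
        unfold dFe
        rw [if_pos (by omega), show (i : ℕ) - ((j : ℕ) + 1) = d by omega]
      rw [eL, e1, e2]
      have hndf : (((k + 1).descFactorial (d + 1) : ℕ) : ℝ)
          = ((k.descFactorial (d + 1) : ℕ) : ℝ) + ((d : ℝ) + 1) * ((k.descFactorial d : ℕ) : ℝ) := by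
        have := congrArg (Nat.cast : ℕ → ℝ) (ndf k d)
        push_cast at this
        linarith
      have hch : (((i : ℕ).choose ((j : ℕ) + 1) : ℕ) : ℝ) * (((j : ℕ) : ℝ) + 1)
          = (((i : ℕ).choose (j : ℕ) : ℕ) : ℝ) * ((d : ℝ) + 1) := by
        have h1 := Nat.choose_succ_right_eq (i : ℕ) (j : ℕ)
        have h2 : (i : ℕ) - (j : ℕ) = d + 1 := by omega
        rw [h2] at h1
        have := congrArg (Nat.cast : ℕ → ℝ) h1
        push_cast at this
        linarith
      linear_combination ((((i : ℕ).choose (j : ℕ) : ℕ) : ℝ) * mu ^ (d + 1)) * hndf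
        - (mu ^ (d + 1) * ((k.descFactorial d : ℕ) : ℝ)) * hch
  · rw [sum_range_support_single (a := (j : ℕ)) hjN
      (fun l hl hla => by
        have hz : bdF (fun l => (l : ℝ) * mu) N l (j : ℕ) = 0 := by
          unfold bdF
          rw [if_neg (by omega), if_neg (by omega)]
        rw [hz, mul_zero])]
    have hb1 : bdF (fun l => (l : ℝ) * mu) N (j : ℕ) (j : ℕ) = 1 := by
      unfold bdF; rw [if_pos rfl]
    rw [hb1, mul_one]
    by_cases h2 : (i : ℕ) = (j : ℕ)
    · have eL : dFe mu (k + 1) (i : ℕ) (j : ℕ) = 1 := by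
        unfold dFe
        rw [if_pos (by omega), show (i : ℕ) - (j : ℕ) = 0 by omega, h2, Nat.choose_self]
        norm_num
      have e1 : dFe mu k (i : ℕ) (j : ℕ) = 1 := by
        unfold dFe
        rw [if_pos (by omega), show (i : ℕ) - (j : ℕ) = 0 by omega, h2, Nat.choose_self]
        norm_num
      rw [eL, e1]
    · have hij : (i : ℕ) < (j : ℕ) := by omega
      have eL : dFe mu (k + 1) (i : ℕ) (j : ℕ) = 0 := by
        unfold dFe; rw [if_neg (by omega)]
      have e1 : dFe mu k (i : ℕ) (j : ℕ) = 0 := by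
        unfold dFe; rw [if_neg (by omega)]
      rw [eL, e1]

lemma genPascal_lattice_neg (n : ℕ) (mu : ℝ) (k : ℕ) :
    genPascal n ((k : ℝ) * mu) (-mu) = ofN (n + 1) (dFe mu k) := by
  ext i j
  simp only [genPascal, ofN, Matrix.of_apply, dFe]
  by_cases h : (j : ℕ) ≤ (i : ℕ)
  · rw [if_pos h, if_pos h, genPow_lattice_neg]
    ring
  · rw [if_neg h, if_neg h]

lemma TP_genPascal_lattice_neg (n : ℕ) (mu : ℝ) (hmu : 0 ≤ mu) (k : ℕ) :
    IsTotallyPositive (genPascal n ((k : ℝ) * mu) (-mu)) := by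
  rw [genPascal_lattice_neg]
  induction k with
  | zero => rw [dF_zero]; exact TP_one
  | succ k ih =>
    rw [dF_succ]
    exact TP_mul_bdm ih (fun l => mul_nonneg (Nat.cast_nonneg l) hmu) _

-- ---- positive lam lattice ----

lemma genPow_lattice_pos (lam : ℝ) (k m : ℕ) :
    genPow ((k : ℝ) * lam) lam m = lam ^ m * ((k.ascFactorial m : ℕ) : ℝ) := by
  induction m with
  | zero => simp
  | succ m ih =>
    rw [genPow_succ, ih, Nat.ascFactorial_succ]
    push_cast
    ring

/-- entries for the positive-lambda lattice points (parameter `k'` is `k - 1`) -/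
noncomputable def aFe (lam : ℝ) (k' : ℕ) (i j : ℕ) : ℝ :=
  if j ≤ i then
    (i.factorial : ℝ) / (j.factorial : ℝ) * lam ^ (i - j) * (((k' + (i - j)).choose (i - j) : ℕ) : ℝ)
  else 0

lemma aF_zero (N : ℕ) (lam : ℝ) : ofN N (aFe lam 0) = ofN N (qF lam 0) := by
  ext i j
  simp only [ofN, Matrix.of_apply, aFe, qF]
  by_cases h : (j : ℕ) ≤ (i : ℕ)
  · rw [if_pos h, if_pos ⟨Nat.zero_le _, h⟩, Nat.zero_add, Nat.choose_self]
    norm_num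
  · rw [if_neg h, if_neg (by omega), if_neg (by omega)]

lemma hockey (k' m : ℕ) :
    ∑ u ∈ Finset.range (m + 1), (k' + u).choose u = (k' + 1 + m).choose m := by
  have h1 : ∀ u, (k' + u).choose u = (u + k').choose k' := by
    intro u
    have h := Nat.choose_symm (Nat.le_add_left k' u)
    rw [Nat.add_sub_cancel] at h
    rw [Nat.add_comm k' u]
    exact h
  rw [Finset.sum_congr rfl (fun u _ => h1 u), Nat.sum_range_add_choose m k']
  have h2 := Nat.choose_symm (show k' + 1 ≤ m + k' + 1 by omega)
  rw [show (m + k' + 1) - (k' + 1) = m by omega] at h2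
  rw [← h2, show m + k' + 1 = k' + 1 + m by omega]

lemma hockey_Icc (k' j i : ℕ) (h : j ≤ i) :
    ∑ l ∈ Finset.Icc j i, (k' + (i - l)).choose (i - l) = (k' + 1 + (i - j)).choose (i - j) := by
  rw [← hockey k' (i - j)]
  apply Finset.sum_nbij' (i := fun l => i - l) (j := fun u => i - u)
  · intro a ha
    rw [Finset.mem_Icc] at ha
    rw [Finset.mem_range]
    omega
  · intro a ha
    rw [Finset.mem_range] at ha
    rw [Finset.mem_Icc]
    omega
  · intro a ha
    rw [Finset.mem_Icc] at ha
    omega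
  · intro a ha
    rw [Finset.mem_range] at ha
    omega
  · intro a ha
    rfl

lemma aF_succ (N : ℕ) (lam : ℝ) (k' : ℕ) :
    ofN N (aFe lam (k' + 1)) = ofN N (aFe lam k') * ofN N (qF lam 0) := by
  ext i j
  rw [ofN_mul_apply]
  have hiN : (i : ℕ) < N := i.isLt
  have hjN : (j : ℕ) < N := j.isLt
  show aFe lam (k' + 1) (i : ℕ) (j : ℕ) = _
  by_cases h : (j : ℕ) ≤ (i : ℕ)
  · have hsub : Finset.Icc (j : ℕ) (i : ℕ) ⊆ Finset.range N := by
      intro l hl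
      rw [Finset.mem_Icc] at hl
      rw [Finset.mem_range]
      omega
    have hz : ∀ l ∈ Finset.range N, l ∉ Finset.Icc (j : ℕ) (i : ℕ) →
        aFe lam k' (i : ℕ) l * qF lam 0 l (j : ℕ) = 0 := by
      intro l hl hnot
      rw [Finset.mem_Icc] at hnot
      push_neg at hnot
      rcases Nat.lt_or_ge l (j : ℕ) with hcase | hcase
      · have : qF lam 0 l (j : ℕ) = 0 := by
          unfold qF
          rw [if_neg (by omega), if_neg (by omega)]
        rw [this, mul_zero]
      · have hli : (i : ℕ) < l := by omega
        have : aFe lam k' (i : ℕ) l = 0 := by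
          unfold aFe
          rw [if_neg (by omega)]
        rw [this, zero_mul]
    rw [← Finset.sum_subset hsub hz]
    have hterm : ∀ l ∈ Finset.Icc (j : ℕ) (i : ℕ),
        aFe lam k' (i : ℕ) l * qF lam 0 l (j : ℕ)
          = ((i : ℕ).factorial : ℝ) / ((j : ℕ).factorial : ℝ) * lam ^ ((i : ℕ) - (j : ℕ))
              * (((k' + ((i : ℕ) - l)).choose ((i : ℕ) - l) : ℕ) : ℝ) := by
      intro l hl
      rw [Finset.mem_Icc] at hl
      unfold aFe qF
      rw [if_pos (by omega), if_pos ⟨by omega, by omega⟩]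
      have hpow : lam ^ ((i : ℕ) - l) * lam ^ (l - (j : ℕ)) = lam ^ ((i : ℕ) - (j : ℕ)) := by
        rw [← pow_add]
        congr 1
        omega
      have hlf : ((l.factorial : ℕ) : ℝ) ≠ 0 := by
        exact_mod_cast l.factorial_ne_zero
      have hjf : (((j : ℕ).factorial : ℕ) : ℝ) ≠ 0 := by
        exact_mod_cast ((j : ℕ)).factorial_ne_zero
      field_simp
      rw [← hpow]
      ring
    rw [Finset.sum_congr rfl hterm, ← Finset.mul_sum]
    have hcast : ∑ l ∈ Finset.Icc (j : ℕ) (i : ℕ),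
        (((k' + ((i : ℕ) - l)).choose ((i : ℕ) - l) : ℕ) : ℝ)
          = (((k' + 1 + ((i : ℕ) - (j : ℕ))).choose ((i : ℕ) - (j : ℕ)) : ℕ) : ℝ) := by
      rw [← Nat.cast_sum]
      exact_mod_cast congrArg (Nat.cast : ℕ → ℝ) (hockey_Icc k' (j : ℕ) (i : ℕ) h)
    rw [hcast]
    unfold aFe
    rw [if_pos h]
  · have eL : aFe lam (k' + 1) (i : ℕ) (j : ℕ) = 0 := by
      unfold aFe
      rw [if_neg h]
    rw [eL]
    symm
    apply Finset.sum_eq_zero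
    intro l hl
    rcases Nat.lt_or_ge (i : ℕ) l with hcase | hcase
    · have : aFe lam k' (i : ℕ) l = 0 := by
        unfold aFe
        rw [if_neg (by omega)]
      rw [this, zero_mul]
    · have : qF lam 0 l (j : ℕ) = 0 := by
        unfold qF
        rw [if_neg (by omega), if_neg (by omega)]
      rw [this, mul_zero]

lemma TP_aF (N : ℕ) (lam : ℝ) (hlam : 0 ≤ lam) (k' : ℕ) :
    IsTotallyPositive (ofN N (aFe lam k')) := by
  induction k' with
  | zero =>
    rw [aF_zero]
    have := TP_mul_Qm (TP_one (N := N)) hlam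
    rwa [one_mul] at this
  | succ k' ih =>
    rw [aF_succ]
    exact TP_mul_Qm ih hlam

lemma genPascal_lattice_pos (n : ℕ) (lam : ℝ) (k' : ℕ) :
    genPascal n (((k' + 1 : ℕ) : ℝ) * lam) lam = ofN (n + 1) (aFe lam k') := by
  ext i j
  simp only [genPascal, ofN, Matrix.of_apply, aFe]
  by_cases h : (j : ℕ) ≤ (i : ℕ)
  · rw [if_pos h, if_pos h, genPow_lattice_pos]
    set m : ℕ := (i : ℕ) - (j : ℕ) with hm
    have hasc : (k' + 1).ascFactorial m = m.factorial * (k' + m).choose m :=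
      Nat.ascFactorial_eq_factorial_mul_choose k' m
    rw [hasc]
    have hcf := Nat.choose_mul_factorial_mul_factorial h
    have hcf' : (((i : ℕ).choose (j : ℕ) : ℕ) : ℝ) * (((j : ℕ).factorial : ℕ) : ℝ)
        * ((m.factorial : ℕ) : ℝ) = (((i : ℕ).factorial : ℕ) : ℝ) := by
      exact_mod_cast congrArg (Nat.cast : ℕ → ℝ) hcf
    have hjf : (((j : ℕ).factorial : ℕ) : ℝ) ≠ 0 := by
      exact_mod_cast ((j : ℕ)).factorial_ne_zero
    push_cast at hcf' ⊢
    field_simp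
    linear_combination (lam ^ m * (((k' + m).choose m : ℕ) : ℝ)) * hcf'
  · rw [if_neg h, if_neg h]

lemma TP_genPascal_lattice_pos (n : ℕ) (lam : ℝ) (hlam : 0 ≤ lam) (k' : ℕ) :
    IsTotallyPositive (genPascal n (((k' + 1 : ℕ) : ℝ) * lam) lam) := by
  rw [genPascal_lattice_pos]
  exact TP_aF (n + 1) lam hlam k'
-- ===== Stage 5: necessity =====

lemma entry_nonneg {N : ℕ} {A : Matrix (Fin N) (Fin N) ℝ} (hA : IsTotallyPositive A)
    (i j : Fin N) : 0 ≤ A i j := by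
  have hsm : ∀ v : Fin N, StrictMono (fun _ : Fin 1 => v) := by
    intro v a b hab
    exfalso
    rw [Fin.lt_def] at hab
    omega
  have := hA 1 (fun _ => i) (fun _ => j) (hsm i) (hsm j)
  rwa [Matrix.det_fin_one, Matrix.submatrix_apply] at this

/-- row/column selections for the critical minor -/
def rho (n m : ℕ) (h : m ≤ n) : Fin m → Fin (n + 1) := fun i => ⟨(i : ℕ) + 1, by omega⟩

def kap (n m : ℕ) (h : m ≤ n) : Fin m → Fin (n + 1) := fun j => ⟨(j : ℕ), by omega⟩

lemma rho_strictMono (n m : ℕ) (h : m ≤ n) : StrictMono (rho n m h) := by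
  intro a b hab
  rw [Fin.lt_def] at hab ⊢
  simp only [rho]
  omega

lemma kap_strictMono (n m : ℕ) (h : m ≤ n) : StrictMono (kap n m h) := by
  intro a b hab
  rw [Fin.lt_def] at hab ⊢
  simp only [kap]
  omega

/-- entries of the unit lower-triangular factor -/
noncomputable def pF (x lam : ℝ) (i j : ℕ) : ℝ :=
  if j ≤ i then ((i.choose j : ℕ) : ℝ) * genPow (x + lam) lam (i - j) else 0

/-- entries of the upper bidiagonal factor -/
noncomputable def bFup (x lam : ℝ) (i j : ℕ) : ℝ :=
  if i = j then x - (i : ℝ) * lam else if j = i + 1 then 1 else 0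

lemma critical_submatrix_eq (n m : ℕ) (h : m ≤ n) (x lam : ℝ) :
    (genPascal n x lam).submatrix (rho n m h) (kap n m h)
      = ofN m (pF x lam) * ofN m (bFup x lam) := by
  ext i j
  rw [Matrix.submatrix_apply, ofN_mul_apply]
  have hiN : (i : ℕ) < m := i.isLt
  have hjN : (j : ℕ) < m := j.isLt
  have hL : (genPascal n x lam) (rho n m h i) (kap n m h j)
      = if (j : ℕ) ≤ (i : ℕ) + 1 then
          genPow x lam ((i : ℕ) + 1 - (j : ℕ)) * (((i : ℕ) + 1).choose (j : ℕ) : ℝ)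
        else 0 := by
    simp only [genPascal, rho, kap]
    rfl
  rw [hL]
  by_cases hj0 : (j : ℕ) = 0
  · rw [sum_range_support_single (a := (j : ℕ)) hjN
      (fun l hl hla => by
        have hz : bFup x lam l (j : ℕ) = 0 := by
          unfold bFup
          rw [if_neg (by omega), if_neg (by omega)]
        rw [hz, mul_zero])]
    have hb : bFup x lam (j : ℕ) (j : ℕ) = x := by
      unfold bFup
      rw [if_pos rfl, hj0]
      norm_num
    have hp : pF x lam (i : ℕ) (j : ℕ) = genPow (x + lam) lam (i : ℕ) := by
      unfold pF
      rw [if_pos (by omega), hj0, Nat.choose_zero_right, Nat.sub_zero, Nat.cast_one, one_mul]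
    rw [hb, hp, if_pos (by omega), hj0, Nat.choose_zero_right, Nat.sub_zero, Nat.cast_one,
      mul_one, genPow_succ']
    ring
  · rw [sum_range_support_pair (a := (j : ℕ) - 1) (b := (j : ℕ)) (by omega) (by omega) hjN
      (fun l hl hla hlb => by
        have hz : bFup x lam l (j : ℕ) = 0 := by
          unfold bFup
          rw [if_neg (by omega), if_neg (by omega)]
        rw [hz, mul_zero])]
    have hb1 : bFup x lam ((j : ℕ) - 1) (j : ℕ) = 1 := by
      unfold bFup
      rw [if_neg (by omega), if_pos (by omega)]
    have hb2 : bFup x lam (j : ℕ) (j : ℕ) = x - ((j : ℕ) : ℝ) * lam := by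
      unfold bFup
      rw [if_pos rfl]
    rw [hb1, hb2, mul_one]
    rcases Nat.lt_trichotomy ((i : ℕ) + 1) (j : ℕ) with hij | hij | hij
    · rw [if_neg (by omega)]
      have e1 : pF x lam (i : ℕ) ((j : ℕ) - 1) = 0 := by
        unfold pF; rw [if_neg (by omega)]
      have e2 : pF x lam (i : ℕ) (j : ℕ) = 0 := by
        unfold pF; rw [if_neg (by omega)]
      rw [e1, e2]
      ring
    · rw [if_pos (by omega), show (i : ℕ) + 1 - (j : ℕ) = 0 by omega, genPow_zero,
        show (i : ℕ) + 1 = (j : ℕ) from hij, Nat.choose_self]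
      have e1 : pF x lam (i : ℕ) ((j : ℕ) - 1) = 1 := by
        unfold pF
        rw [if_pos (by omega), show (i : ℕ) - ((j : ℕ) - 1) = 0 by omega, genPow_zero,
          show (j : ℕ) - 1 = (i : ℕ) by omega, Nat.choose_self]
        norm_num
      have e2 : pF x lam (i : ℕ) (j : ℕ) = 0 := by
        unfold pF; rw [if_neg (by omega)]
      rw [e1, e2]
      ring
    · -- j ≤ i : the core identity
      set q' : ℕ := (j : ℕ) - 1 with hq'
      set d : ℕ := (i : ℕ) - (j : ℕ) with hd
      have e1 : pF x lam (i : ℕ) ((j : ℕ) - 1)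
          = (((q' + d + 1).choose q' : ℕ) : ℝ) * genPow (x + lam) lam (d + 1) := by
        unfold pF
        rw [if_pos (by omega), show (i : ℕ) - ((j : ℕ) - 1) = d + 1 by omega,
          show (i : ℕ) = q' + d + 1 by omega, show (j : ℕ) - 1 = q' from rfl]
      have e2 : pF x lam (i : ℕ) (j : ℕ)
          = (((q' + d + 1).choose (q' + 1) : ℕ) : ℝ) * genPow (x + lam) lam d := by
        unfold pF
        rw [if_pos (by omega), show (i : ℕ) - (j : ℕ) = d from rfl,
          show (i : ℕ) = q' + d + 1 by omega, show (j : ℕ) = q' + 1 by omega]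
      rw [if_pos (by omega), e1, e2, show (i : ℕ) + 1 - (j : ℕ) = d + 1 by omega,
        show (i : ℕ) + 1 = q' + d + 2 by omega, show (j : ℕ) = q' + 1 by omega]
      have hcast : ((q' + 1 : ℕ) : ℝ) = (q' : ℝ) + 1 := by push_cast; ring
      rw [hcast]
      have hcore := core_id x lam q' d
      linarith [hcore]

lemma det_pF (m : ℕ) (x lam : ℝ) : (ofN m (pF x lam)).det = 1 := by
  have htri : (ofN m (pF x lam)).BlockTriangular OrderDual.toDual := by
    intro i j hij
    have : (i : ℕ) < (j : ℕ) := hij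
    simp only [ofN, Matrix.of_apply, pF]
    rw [if_neg (by omega)]
  rw [Matrix.det_of_lowerTriangular _ htri]
  apply Finset.prod_eq_one
  intro i _
  simp only [ofN, Matrix.of_apply, pF]
  rw [if_pos (le_refl _), Nat.sub_self, genPow_zero, Nat.choose_self]
  norm_num

lemma det_bFup (m : ℕ) (x lam : ℝ) :
    (ofN m (bFup x lam)).det = ∏ t ∈ Finset.range m, (x - (t : ℝ) * lam) := by
  have htri : (ofN m (bFup x lam)).BlockTriangular id := by
    intro i j hij
    have : (j : ℕ) < (i : ℕ) := hij
    simp only [ofN, Matrix.of_apply, bFup]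
    rw [if_neg (by omega), if_neg (by omega)]
  rw [Matrix.det_of_upperTriangular htri]
  rw [← Fin.prod_univ_eq_prod_range (fun t => x - (t : ℝ) * lam) m]
  apply Finset.prod_congr rfl
  intro i _
  simp [ofN, bFup]

lemma critical_minor (n m : ℕ) (h : m ≤ n) (x lam : ℝ) :
    ((genPascal n x lam).submatrix (rho n m h) (kap n m h)).det
      = ∏ t ∈ Finset.range m, (x - (t : ℝ) * lam) := by
  rw [critical_submatrix_eq n m h x lam, Matrix.det_mul, det_pF, det_bFup, one_mul]

lemma prod_neg_of_between (x mu : ℝ) (k : ℕ) (h1 : (k : ℝ) * mu < x)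
    (h2 : x < ((k : ℝ) + 1) * mu) :
    ∏ t ∈ Finset.range (k + 2), (x - (t : ℝ) * mu) < 0 := by
  have hmu : 0 < mu := by nlinarith
  rw [Finset.prod_range_succ]
  apply mul_neg_of_pos_of_neg
  · apply Finset.prod_pos
    intro t ht
    rw [Finset.mem_range] at ht
    have htk : (t : ℝ) ≤ (k : ℝ) := by
      have : t ≤ k := by omega
      exact_mod_cast this
    nlinarith
  · push_cast
    nlinarith

lemma necessity (n : ℕ) (hn : 1 ≤ n) (x lam : ℝ)
    (hTP : IsTotallyPositive (genPascal n x lam)) :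
    ((n : ℝ) - 1) * |lam| ≤ x ∨ ∃ k : ℕ, k ≤ n - 1 ∧ x = (k : ℝ) * |lam| := by
  by_contra hcon
  push_neg at hcon
  obtain ⟨h1, h2⟩ := hcon
  have hn1 : (1 : ℝ) ≤ (n : ℝ) := by exact_mod_cast hn
  have hx0 : 0 ≤ x := by
    have := entry_nonneg hTP ⟨1, by omega⟩ ⟨0, by omega⟩
    simp only [genPascal] at this
    rw [if_pos (by norm_num)] at this
    norm_num at this
    rwa [genPow_one] at this
  set mu := |lam| with hmu
  have hmu0 : 0 ≤ mu := abs_nonneg lam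
  have hmupos : 0 < mu := by
    rcases lt_or_eq_of_le hmu0 with hh | hh
    · exact hh
    · exfalso
      rw [← hh] at h1
      nlinarith
  set k := Nat.floor (x / mu) with hk
  have hdiv0 : 0 ≤ x / mu := div_nonneg hx0 hmu0
  have hkle : (k : ℝ) * mu ≤ x := by
    have := Nat.floor_le hdiv0
    rw [← hk] at this
    calc (k : ℝ) * mu ≤ (x / mu) * mu := by nlinarith
    _ = x := by field_simp
  have hklt : x < ((k : ℝ) + 1) * mu := by
    have := Nat.lt_floor_add_one (x / mu)
    rw [← hk] at this
    calc x = (x / mu) * mu := by field_simp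
    _ < ((k : ℝ) + 1) * mu := by nlinarith
  have hkn : k + 1 < n := by
    have hr : (k : ℝ) < (n : ℝ) - 1 := by nlinarith
    have hr2 : (k : ℝ) + 1 < (n : ℝ) := by linarith
    exact_mod_cast hr2
  have hkx : (k : ℝ) * mu < x :=
    lt_of_le_of_ne hkle (fun hh => h2 k (by omega) hh.symm)
  have hprod : ∏ t ∈ Finset.range (k + 2), (x - (t : ℝ) * mu) < 0 :=
    prod_neg_of_between x mu k hkx hklt
  rcases le_or_gt 0 lam with hlam | hlam
  · have hmueq : mu = lam := abs_of_nonneg hlam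
    have hdet := critical_minor n (k + 2) (by omega) x lam
    have hTPm := hTP (k + 2) (rho n (k + 2) (by omega)) (kap n (k + 2) (by omega))
      (rho_strictMono n (k + 2) (by omega)) (kap_strictMono n (k + 2) (by omega))
    rw [hdet] at hTPm
    rw [← hmueq] at hTPm
    linarith
  · have hmueq : mu = -lam := abs_of_neg hlam
    have hent := entry_nonneg hTP ⟨k + 2, by omega⟩ ⟨0, by omega⟩
    simp only [genPascal] at hent
    rw [if_pos (by norm_num)] at hent
    norm_num at hent
    have hgp : genPow x lam (k + 2) = ∏ t ∈ Finset.range (k + 2), (x - (t : ℝ) * mu) := by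
      rw [genPow]
      apply Finset.prod_congr rfl
      intro t _
      have : lam = -mu := by linarith [hmueq]
      rw [this]
      ring
    rw [hgp] at hent
    linarith

end GPTP

/-- For `n ≥ 1`, the generalized lower triangular Pascal matrix `P_{n,λ}[x]`
is totally positive if and only if `x ≥ (n−1)|λ|` or `x = k|λ|` for some
`k ∈ {0, 1, …, n−1}`. -/
theorem genPascal_totallyPositive_iff (n : ℕ) (hn : 1 ≤ n) (x lam : ℝ) :
    IsTotallyPositive (genPascal n x lam) ↔
      ((n : ℝ) - 1) * |lam| ≤ x ∨ ∃ k : ℕ, k ≤ n - 1 ∧ x = (k : ℝ) * |lam| := by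
  constructor
  · exact GPTP.necessity n hn x lam
  · rintro (hbig | ⟨k, hk, hx⟩)
    · exact GPTP.TP_genPascal_of_big n x lam hbig
    · rcases lt_trichotomy lam 0 with hlam | hlam | hlam
      · have hmueq : |lam| = -lam := abs_of_neg hlam
        have hTP := GPTP.TP_genPascal_lattice_neg n (-lam) (by linarith) k
        rw [neg_neg] at hTP
        have hxeq : x = (k : ℝ) * (-lam) := by rw [hx, hmueq]
        rwa [← hxeq] at hTP
      · subst hlam
        have hxeq : x = 0 := by rw [hx]; simp
        rw [hxeq, GPTP.genPascal_x_zero]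
        exact GPTP.TP_one
      · have hmueq : |lam| = lam := abs_of_pos hlam
        rcases Nat.eq_zero_or_pos k with hk0 | hkpos
        · subst hk0
          have hxeq : x = 0 := by rw [hx]; simp
          rw [hxeq, GPTP.genPascal_x_zero]
          exact GPTP.TP_one
        · obtain ⟨k', rfl⟩ : ∃ k', k = k' + 1 := ⟨k - 1, by omega⟩
          have hTP := GPTP.TP_genPascal_lattice_pos n lam (le_of_lt hlam) k'
          have hxeq : x = ((k' + 1 : ℕ) : ℝ) * lam := by rw [hx, hmueq]
          rwa [← hxeq] at hTP
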